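/- Integration-by-parts identity for the curvature cross term: ∫_{ℝ^d} (ε Δu − ε^{-1} W'(u)) (H·∇u) dx = ∫_{ℝ^d} (∇·H) ((ε/2)|∇u|² + ε^{-1} W(u)) dx − ε ∫_{ℝ^d} ∇H : (∇u ⊗ ∇u) dx, where ∇H : (∇u ⊗ ∇u) = Σ_{i,j} ∂_i H_j ∂_i u ∂_j u. -/

import Mathlib

open MeasureTheory Set
open scoped RealInnerProductSpace

noncomputable section

/-- The `i`-th standard basis vector of `ℝ^d`. -/
def eb {d : ℕ} (i : Fin d) : EuclideanSpace ℝ (Fin d) :=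
  EuclideanSpace.single i 1

/-- The Laplacian `Δf = ∑ i ∂_i ∂_i f`. -/
def lap {d : ℕ} (f : EuclideanSpace ℝ (Fin d) → ℝ) (x : EuclideanSpace ℝ (Fin d)) : ℝ :=
  ∑ i, fderiv ℝ (fun y => fderiv ℝ f y (eb i)) x (eb i)

/-- The divergence `∇·F = ∑ i ∂_i F_i`. -/
def divE {d : ℕ} (F : EuclideanSpace ℝ (Fin d) → EuclideanSpace ℝ (Fin d))
    (x : EuclideanSpace ℝ (Fin d)) : ℝ :=
  ∑ i, ⟪fderiv ℝ F x (eb i), eb i⟫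

/- ### Auxiliary lemmas -/

theorem sum_single_eb {d : ℕ} (w : EuclideanSpace ℝ (Fin d)) : ∑ j, w j • eb j = w := by
  have := (EuclideanSpace.basisFun (Fin d) ℝ).sum_repr w
  simpa [eb, EuclideanSpace.basisFun_apply, EuclideanSpace.basisFun_repr] using this

theorem clm_expand {d : ℕ} (L : EuclideanSpace ℝ (Fin d) →L[ℝ] ℝ) (w : EuclideanSpace ℝ (Fin d)) :
    L w = ∑ j, w j * L (eb j) := by
  conv_lhs => rw [← sum_single_eb w, map_sum]
  simp [smul_eq_mul]

theorem inner_gradient {d : ℕ} (f : EuclideanSpace ℝ (Fin d) → ℝ) (x v : EuclideanSpace ℝ (Fin d)) :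
    ⟪gradient f x, v⟫ = fderiv ℝ f x v :=
  InnerProductSpace.toDual_symm_apply

theorem inner_eb_right {d : ℕ} (w : EuclideanSpace ℝ (Fin d)) (i : Fin d) : ⟪w, eb i⟫ = w i := by
  simp [eb, EuclideanSpace.inner_single_right]

theorem proj_apply' {d : ℕ} (i : Fin d) (w : EuclideanSpace ℝ (Fin d)) :
    EuclideanSpace.proj (𝕜 := ℝ) i w = w i := rfl

theorem integral_fderiv_eq_zero' {d : ℕ} {f : EuclideanSpace ℝ (Fin d) → ℝ}
    (hf : ContDiff ℝ 1 f) (hsupp : HasCompactSupport f) (v : EuclideanSpace ℝ (Fin d)) :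
    ∫ x, fderiv ℝ f x v = 0 := by
  have hcont : Continuous fun x => fderiv ℝ f x v :=
    (hf.continuous_fderiv one_ne_zero).clm_apply continuous_const
  have hcs : HasCompactSupport fun x => fderiv ℝ f x v :=
    (hsupp.fderiv ℝ).comp_left (g := fun L : EuclideanSpace ℝ (Fin d) →L[ℝ] ℝ => L v) rfl
  have h1 : Integrable (fun x => fderiv ℝ f x v * (1:ℝ)) := by
    simpa [mul_one] using hcont.integrable_of_hasCompactSupport hcs
  have h2 : (fun x => f x * fderiv ℝ (fun _ => (1:ℝ)) x v) = fun _ => (0:ℝ) := by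
    ext x; simp
  have h3 : Integrable (fun x => f x * fderiv ℝ (fun _ => (1:ℝ)) x v) := by
    rw [h2]; exact integrable_zero _ _ _
  have h4 : Integrable (fun x => f x * (1:ℝ)) := by
    simpa [mul_one] using hf.continuous.integrable_of_hasCompactSupport hsupp
  have := integral_mul_fderiv_eq_neg_fderiv_mul_of_integrable (μ := volume) (f := f)
    (g := fun _ => (1:ℝ)) (v := v) h1 h3 h4 (fun x _ => hf.differentiable one_ne_zero x) (fun x _ => differentiableAt_const _)
  rw [h2] at this
  simpa using this.symm

section Main

variable {d : ℕ} {ε : ℝ} {W : ℝ → ℝ} {u : EuclideanSpace ℝ (Fin d) → ℝ}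
  {H : EuclideanSpace ℝ (Fin d) → EuclideanSpace ℝ (Fin d)}

/-- The scalar components of the vector field to which we apply the divergence theorem. -/
def Vf (ε : ℝ) (W : ℝ → ℝ) (u : EuclideanSpace ℝ (Fin d) → ℝ)
    (H : EuclideanSpace ℝ (Fin d) → EuclideanSpace ℝ (Fin d)) (i : Fin d)
    (y : EuclideanSpace ℝ (Fin d)) : ℝ :=
  ε * (fderiv ℝ u y (H y) * fderiv ℝ u y (eb i))
    - H y i * (ε / 2 * (∑ j, fderiv ℝ u y (eb j) * fderiv ℝ u y (eb j)) + ε⁻¹ * W (u y))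

theorem Vf_hasFDerivAt (hW : ContDiff ℝ 1 W) (hu : ContDiff ℝ 2 u) (hH : ContDiff ℝ 1 H)
    (i : Fin d) (x : EuclideanSpace ℝ (Fin d)) :
    HasFDerivAt (Vf ε W u H i)
      (ε • ((fderiv ℝ u x (H x)) • ((fderiv ℝ (fderiv ℝ u) x).flip (eb i))
          + (fderiv ℝ u x (eb i)) • ((fderiv ℝ u x).comp (fderiv ℝ H x)
              + (fderiv ℝ (fderiv ℝ u) x).flip (H x)))
       - ((H x i) • ((ε / 2) • (∑ j, ((fderiv ℝ u x (eb j)) • ((fderiv ℝ (fderiv ℝ u) x).flip (eb j))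
              + (fderiv ℝ u x (eb j)) • ((fderiv ℝ (fderiv ℝ u) x).flip (eb j))))
            + ε⁻¹ • ((deriv W (u x)) • fderiv ℝ u x))
          + (ε / 2 * (∑ j, fderiv ℝ u x (eb j) * fderiv ℝ u x (eb j)) + ε⁻¹ * W (u x)) •
              ((EuclideanSpace.proj i).comp (fderiv ℝ H x)))) x := by
  have hdu : ContDiff ℝ 1 (fderiv ℝ u) := hu.fderiv_right (by norm_num)
  have hdux : HasFDerivAt (fderiv ℝ u) (fderiv ℝ (fderiv ℝ u) x) x :=
    ((hdu.differentiable one_ne_zero) x).hasFDerivAt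
  have hHx : HasFDerivAt H (fderiv ℝ H x) x := ((hH.differentiable one_ne_zero) x).hasFDerivAt
  have hq : ∀ j : Fin d, HasFDerivAt (fun y => fderiv ℝ u y (eb j))
      ((fderiv ℝ (fderiv ℝ u) x).flip (eb j)) x := by
    intro j
    simpa using hdux.clm_apply (hasFDerivAt_const (eb j) x)
  have hA : HasFDerivAt (fun y => fderiv ℝ u y (H y))
      ((fderiv ℝ u x).comp (fderiv ℝ H x) + (fderiv ℝ (fderiv ℝ u) x).flip (H x)) x :=
    hdux.clm_apply hHx
  have hHi : HasFDerivAt (fun y => H y i) ((EuclideanSpace.proj i).comp (fderiv ℝ H x)) x := by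
    exact ((EuclideanSpace.proj i).hasFDerivAt (x := H x)).comp x hHx
  have hS : HasFDerivAt (fun y => ∑ j, fderiv ℝ u y (eb j) * fderiv ℝ u y (eb j))
      ((∑ j, ((fderiv ℝ u x (eb j)) • ((fderiv ℝ (fderiv ℝ u) x).flip (eb j))
          + (fderiv ℝ u x (eb j)) • ((fderiv ℝ (fderiv ℝ u) x).flip (eb j))))) x :=
    HasFDerivAt.fun_sum fun j _ => (hq j).mul (hq j)
  have hWu : HasFDerivAt (fun y => W (u y)) ((deriv W (u x)) • fderiv ℝ u x) x :=
    ((hW.differentiable one_ne_zero (u x)).hasDerivAt).comp_hasFDerivAt x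
      ((hu.differentiable two_ne_zero) x).hasFDerivAt
  exact ((hA.mul (hq i)).const_mul ε).sub
    (hHi.mul ((hS.const_mul (ε / 2)).add (hWu.const_mul ε⁻¹)))

theorem Vf_contDiff (hW : ContDiff ℝ 1 W) (hu : ContDiff ℝ 2 u) (hH : ContDiff ℝ 1 H)
    (i : Fin d) : ContDiff ℝ 1 (Vf ε W u H i) := by
  have hdu : ContDiff ℝ 1 (fderiv ℝ u) := hu.fderiv_right (by norm_num)
  have hu1 : ContDiff ℝ 1 u := hu.of_le one_le_two
  have hq : ∀ j : Fin d, ContDiff ℝ 1 (fun y => fderiv ℝ u y (eb j)) := fun j =>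
    hdu.clm_apply contDiff_const
  have hHi : ContDiff ℝ 1 (fun y => H y i) := by
    exact (EuclideanSpace.proj i).contDiff.comp hH
  exact (contDiff_const.mul ((hdu.clm_apply hH).mul (hq i))).sub
    (hHi.mul ((contDiff_const.mul (ContDiff.sum fun j _ => (hq j).mul (hq j))).add
      (contDiff_const.mul (hW.comp hu1))))

theorem Vf_support (hHsupp : HasCompactSupport H) (i : Fin d) :
    HasCompactSupport (Vf ε W u H i) := by
  apply HasCompactSupport.intro hHsupp
  intro x hx
  have h0 : H x = 0 := image_eq_zero_of_notMem_tsupport hx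
  simp [Vf, h0]

end Main

/-- Integration-by-parts identity for the curvature cross term. -/
theorem integration_by_parts_cross_term
    (d : ℕ) (hd : 1 ≤ d) (ε : ℝ) (hε : 0 < ε)
    (W : ℝ → ℝ) (hW : ContDiff ℝ 1 W)
    (u : EuclideanSpace ℝ (Fin d) → ℝ) (hu : ContDiff ℝ 2 u)
    (H : EuclideanSpace ℝ (Fin d) → EuclideanSpace ℝ (Fin d))
    (hH : ContDiff ℝ 1 H) (hHsupp : HasCompactSupport H) :
    (∫ x, (ε * lap u x - ε⁻¹ * deriv W (u x)) * ⟪H x, gradient u x⟫)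
      = (∫ x, divE H x * (ε / 2 * ‖gradient u x‖ ^ 2 + ε⁻¹ * W (u x)))
        - ε * ∫ x, ∑ i, ∑ j,
            (⟪fderiv ℝ H x (eb i), eb j⟫ * ⟪gradient u x, eb i⟫ * ⟪gradient u x, eb j⟫) := by
  classical
  have hdu : ContDiff ℝ 1 (fderiv ℝ u) := hu.fderiv_right (by norm_num)
  have hu1 : ContDiff ℝ 1 u := hu.of_le one_le_two
  have hsymm : ∀ (x : EuclideanSpace ℝ (Fin d)) (i j : Fin d),
      fderiv ℝ (fderiv ℝ u) x (eb i) (eb j) = fderiv ℝ (fderiv ℝ u) x (eb j) (eb i) := by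
    intro x i j
    exact (hu.contDiffAt.isSymmSndFDerivAt (by norm_num)) (eb i) (eb j)
  -- the pointwise divergence identity
  have hpoint : ∀ x, ∑ i, fderiv ℝ (Vf ε W u H i) x (eb i)
      = (ε * (∑ i, fderiv ℝ (fderiv ℝ u) x (eb i) (eb i)) - ε⁻¹ * deriv W (u x)) *
            fderiv ℝ u x (H x)
        - (∑ i, fderiv ℝ H x (eb i) i) *
            (ε / 2 * (∑ j, fderiv ℝ u x (eb j) * fderiv ℝ u x (eb j)) + ε⁻¹ * W (u x))
        + ε * ∑ i, ∑ j, fderiv ℝ H x (eb i) j * fderiv ℝ u x (eb i) * fderiv ℝ u x (eb j) := by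
    intro x
    have hfd : ∀ i : Fin d, fderiv ℝ (Vf ε W u H i) x (eb i)
        = ε * (fderiv ℝ u x (H x) * fderiv ℝ (fderiv ℝ u) x (eb i) (eb i)
            + fderiv ℝ u x (eb i) * (fderiv ℝ u x (fderiv ℝ H x (eb i))
                + fderiv ℝ (fderiv ℝ u) x (eb i) (H x)))
          - (H x i * (ε / 2 * (∑ j, (fderiv ℝ u x (eb j) * fderiv ℝ (fderiv ℝ u) x (eb i) (eb j)
                  + fderiv ℝ u x (eb j) * fderiv ℝ (fderiv ℝ u) x (eb i) (eb j)))
              + ε⁻¹ * (deriv W (u x) * fderiv ℝ u x (eb i)))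
            + (ε / 2 * (∑ j, fderiv ℝ u x (eb j) * fderiv ℝ u x (eb j)) + ε⁻¹ * W (u x)) *
                fderiv ℝ H x (eb i) i) := by
      intro i
      rw [(Vf_hasFDerivAt hW hu hH i x).fderiv]
      simp only [ContinuousLinearMap.coe_sub', Pi.sub_apply, ContinuousLinearMap.coe_smul',
        Pi.smul_apply, ContinuousLinearMap.add_apply, ContinuousLinearMap.coe_comp',
        Function.comp_apply, ContinuousLinearMap.flip_apply, ContinuousLinearMap.sum_apply,
        smul_eq_mul, proj_apply']
    calc ∑ i, fderiv ℝ (Vf ε W u H i) x (eb i)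
        = ∑ i, (ε * (fderiv ℝ u x (H x) * fderiv ℝ (fderiv ℝ u) x (eb i) (eb i))
            + ε * (fderiv ℝ u x (eb i) *
                ∑ j, fderiv ℝ H x (eb i) j * fderiv ℝ u x (eb j))
            + ε * (fderiv ℝ u x (eb i) *
                ∑ j, H x j * fderiv ℝ (fderiv ℝ u) x (eb i) (eb j))
            - ε * (H x i * ∑ j, fderiv ℝ u x (eb j) * fderiv ℝ (fderiv ℝ u) x (eb i) (eb j))
            - ε⁻¹ * deriv W (u x) * (H x i * fderiv ℝ u x (eb i))
            - (ε / 2 * (∑ j, fderiv ℝ u x (eb j) * fderiv ℝ u x (eb j)) + ε⁻¹ * W (u x)) *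
                fderiv ℝ H x (eb i) i) := by
          refine Finset.sum_congr rfl fun i _ => ?_
          rw [hfd i, clm_expand (fderiv ℝ u x) (fderiv ℝ H x (eb i)),
            clm_expand (fderiv ℝ (fderiv ℝ u) x (eb i)) (H x)]
          rw [show (∑ j, (fderiv ℝ u x (eb j) * fderiv ℝ (fderiv ℝ u) x (eb i) (eb j)
              + fderiv ℝ u x (eb j) * fderiv ℝ (fderiv ℝ u) x (eb i) (eb j)))
            = 2 * ∑ j, fderiv ℝ u x (eb j) * fderiv ℝ (fderiv ℝ u) x (eb i) (eb j) from by
              rw [two_mul, ← Finset.sum_add_distrib]]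
          ring
      _ = (∑ i, ε * (fderiv ℝ u x (H x) * fderiv ℝ (fderiv ℝ u) x (eb i) (eb i)))
          + (∑ i, ε * (fderiv ℝ u x (eb i) *
              ∑ j, fderiv ℝ H x (eb i) j * fderiv ℝ u x (eb j)))
          + (∑ i, ε * (fderiv ℝ u x (eb i) *
              ∑ j, H x j * fderiv ℝ (fderiv ℝ u) x (eb i) (eb j)))
          - (∑ i, ε * (H x i * ∑ j, fderiv ℝ u x (eb j) * fderiv ℝ (fderiv ℝ u) x (eb i) (eb j)))
          - (∑ i, ε⁻¹ * deriv W (u x) * (H x i * fderiv ℝ u x (eb i)))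
          - (∑ i, (ε / 2 * (∑ j, fderiv ℝ u x (eb j) * fderiv ℝ u x (eb j)) + ε⁻¹ * W (u x)) *
              fderiv ℝ H x (eb i) i) := by
          simp only [Finset.sum_add_distrib, Finset.sum_sub_distrib]
      _ = (ε * (∑ i, fderiv ℝ (fderiv ℝ u) x (eb i) (eb i)) - ε⁻¹ * deriv W (u x)) *
              fderiv ℝ u x (H x)
          - (∑ i, fderiv ℝ H x (eb i) i) *
              (ε / 2 * (∑ j, fderiv ℝ u x (eb j) * fderiv ℝ u x (eb j)) + ε⁻¹ * W (u x))
          + ε * ∑ i, ∑ j, fderiv ℝ H x (eb i) j * fderiv ℝ u x (eb i) * fderiv ℝ u x (eb j) := by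
          have swap : (∑ i, ε * (fderiv ℝ u x (eb i) *
              ∑ j, H x j * fderiv ℝ (fderiv ℝ u) x (eb i) (eb j)))
              = ∑ i, ε * (H x i *
                  ∑ j, fderiv ℝ u x (eb j) * fderiv ℝ (fderiv ℝ u) x (eb i) (eb j)) := by
            simp only [Finset.mul_sum]
            rw [Finset.sum_comm]
            exact Finset.sum_congr rfl fun i _ => Finset.sum_congr rfl fun j _ => by
              rw [hsymm x j i]; ring
          rw [swap]
          have e1 : (∑ i, ε * (fderiv ℝ u x (H x) * fderiv ℝ (fderiv ℝ u) x (eb i) (eb i)))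
              = ε * (∑ i, fderiv ℝ (fderiv ℝ u) x (eb i) (eb i)) * fderiv ℝ u x (H x) := by
            simp only [Finset.mul_sum, Finset.sum_mul]
            exact Finset.sum_congr rfl fun i _ => by ring
          have e2 : (∑ i, ε * (fderiv ℝ u x (eb i) *
              ∑ j, fderiv ℝ H x (eb i) j * fderiv ℝ u x (eb j)))
              = ε * ∑ i, ∑ j, fderiv ℝ H x (eb i) j * fderiv ℝ u x (eb i) *
                  fderiv ℝ u x (eb j) := by
            simp only [Finset.mul_sum]
            exact Finset.sum_congr rfl fun i _ => Finset.sum_congr rfl fun j _ => by ring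
          have e5 : (∑ i, ε⁻¹ * deriv W (u x) * (H x i * fderiv ℝ u x (eb i)))
              = ε⁻¹ * deriv W (u x) * fderiv ℝ u x (H x) := by
            rw [clm_expand (fderiv ℝ u x) (H x), Finset.mul_sum]
          have e6 : (∑ i, (ε / 2 * (∑ j, fderiv ℝ u x (eb j) * fderiv ℝ u x (eb j))
                + ε⁻¹ * W (u x)) * fderiv ℝ H x (eb i) i)
              = (∑ i, fderiv ℝ H x (eb i) i) *
                  (ε / 2 * (∑ j, fderiv ℝ u x (eb j) * fderiv ℝ u x (eb j)) + ε⁻¹ * W (u x)) := by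
            rw [Finset.sum_mul]
            exact Finset.sum_congr rfl fun i _ => mul_comm _ _
          rw [e1, e2, e5, e6]
          ring
  -- integrability of the three pieces
  have hcf2 : Continuous (fderiv ℝ (fderiv ℝ u)) := hdu.continuous_fderiv one_ne_zero
  have hcdu : Continuous (fderiv ℝ u) := hu1.continuous_fderiv one_ne_zero
  have hcdH : Continuous (fderiv ℝ H) := hH.continuous_fderiv one_ne_zero
  have hHzero : ∀ x, x ∉ tsupport H → fderiv ℝ H x = 0 := by
    intro x hx
    by_contra h
    exact hx (support_fderiv_subset ℝ h)
  have iL : Integrable (fun x =>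
      (ε * (∑ i, fderiv ℝ (fderiv ℝ u) x (eb i) (eb i)) - ε⁻¹ * deriv W (u x)) *
        fderiv ℝ u x (H x)) := by
    apply Continuous.integrable_of_hasCompactSupport
    · exact ((continuous_const.mul (continuous_finset_sum _ fun i _ =>
        (hcf2.clm_apply continuous_const).clm_apply continuous_const)).sub
        (continuous_const.mul ((hW.continuous_deriv le_rfl).comp hu1.continuous))).mul
        (hcdu.clm_apply hH.continuous)
    · apply HasCompactSupport.intro hHsupp
      intro x hx
      simp [image_eq_zero_of_notMem_tsupport hx]
  have iM : Integrable (fun x => (∑ i, fderiv ℝ H x (eb i) i) *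
      (ε / 2 * (∑ j, fderiv ℝ u x (eb j) * fderiv ℝ u x (eb j)) + ε⁻¹ * W (u x))) := by
    apply Continuous.integrable_of_hasCompactSupport
    · exact (continuous_finset_sum _ fun i _ => (EuclideanSpace.proj (𝕜 := ℝ) i).continuous.comp
        (hcdH.clm_apply continuous_const)).mul
        ((continuous_const.mul (continuous_finset_sum _ fun j _ =>
          (hcdu.clm_apply continuous_const).mul (hcdu.clm_apply continuous_const))).add
          (continuous_const.mul (hW.continuous.comp hu1.continuous)))
    · apply HasCompactSupport.intro hHsupp
      intro x hx
      simp [hHzero x hx]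
  have iN : Integrable (fun x =>
      ∑ i, ∑ j, fderiv ℝ H x (eb i) j * fderiv ℝ u x (eb i) * fderiv ℝ u x (eb j)) := by
    apply Continuous.integrable_of_hasCompactSupport
    · exact continuous_finset_sum _ fun i _ => continuous_finset_sum _ fun j _ =>
        (((EuclideanSpace.proj (𝕜 := ℝ) j).continuous.comp
          (hcdH.clm_apply continuous_const)).mul (hcdu.clm_apply continuous_const)).mul
          (hcdu.clm_apply continuous_const)
    · apply HasCompactSupport.intro hHsupp
      intro x hx
      simp [hHzero x hx]
  -- the divergence theorem part
  have hVint : ∀ i : Fin d, Integrable (fun x => fderiv ℝ (Vf ε W u H i) x (eb i)) := by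
    intro i
    apply Continuous.integrable_of_hasCompactSupport
    · exact ((Vf_contDiff hW hu hH i).continuous_fderiv one_ne_zero).clm_apply continuous_const
    · exact ((Vf_support hHsupp i).fderiv ℝ).comp_left
        (g := fun L : EuclideanSpace ℝ (Fin d) →L[ℝ] ℝ => L (eb i)) rfl
  have hsum0 : ∫ x, ∑ i, fderiv ℝ (Vf ε W u H i) x (eb i) = 0 := by
    rw [integral_finset_sum _ fun i _ => hVint i]
    exact Finset.sum_eq_zero fun i _ =>
      integral_fderiv_eq_zero' (Vf_contDiff hW hu hH i) (Vf_support hHsupp i) (eb i)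
  simp_rw [hpoint] at hsum0
  have iLM : Integrable (fun x =>
      (ε * (∑ i, fderiv ℝ (fderiv ℝ u) x (eb i) (eb i)) - ε⁻¹ * deriv W (u x)) *
        fderiv ℝ u x (H x)
      - (∑ i, fderiv ℝ H x (eb i) i) *
          (ε / 2 * (∑ j, fderiv ℝ u x (eb j) * fderiv ℝ u x (eb j)) + ε⁻¹ * W (u x))) := iL.sub iM
  have iNc : Integrable (fun x => ε *
      ∑ i, ∑ j, fderiv ℝ H x (eb i) j * fderiv ℝ u x (eb i) * fderiv ℝ u x (eb j)) :=
    iN.const_mul ε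
  rw [integral_add iLM iNc, integral_sub iL iM, integral_const_mul] at hsum0
  -- rewrite the goal integrals
  have g1 : (fun x => (ε * lap u x - ε⁻¹ * deriv W (u x)) * ⟪H x, gradient u x⟫)
      = fun x => (ε * (∑ i, fderiv ℝ (fderiv ℝ u) x (eb i) (eb i)) - ε⁻¹ * deriv W (u x)) *
          fderiv ℝ u x (H x) := by
    funext x
    have hlap : lap u x = ∑ i, fderiv ℝ (fderiv ℝ u) x (eb i) (eb i) := by
      unfold lap
      refine Finset.sum_congr rfl fun i _ => ?_
      have hq : HasFDerivAt (fun y => fderiv ℝ u y (eb i))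
          ((fderiv ℝ (fderiv ℝ u) x).flip (eb i)) x := by
        simpa using ((hdu.differentiable one_ne_zero x).hasFDerivAt.clm_apply
          (hasFDerivAt_const (eb i) x))
      rw [hq.fderiv]
      simp [ContinuousLinearMap.flip_apply]
    rw [hlap, real_inner_comm, inner_gradient]
  have hgrad_eb : ∀ (x : EuclideanSpace ℝ (Fin d)) (i : Fin d),
      ⟪gradient u x, eb i⟫ = fderiv ℝ u x (eb i) := fun x i => inner_gradient u x (eb i)
  have g2 : (fun x => divE H x * (ε / 2 * ‖gradient u x‖ ^ 2 + ε⁻¹ * W (u x)))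
      = fun x => (∑ i, fderiv ℝ H x (eb i) i) *
          (ε / 2 * (∑ j, fderiv ℝ u x (eb j) * fderiv ℝ u x (eb j)) + ε⁻¹ * W (u x)) := by
    funext x
    have hdivE : divE H x = ∑ i, fderiv ℝ H x (eb i) i := by
      unfold divE
      exact Finset.sum_congr rfl fun i _ => inner_eb_right _ i
    have hnorm : ‖gradient u x‖ ^ 2 = ∑ j, fderiv ℝ u x (eb j) * fderiv ℝ u x (eb j) := by
      rw [← real_inner_self_eq_norm_sq, inner_gradient,
        clm_expand (fderiv ℝ u x) (gradient u x)]
      refine Finset.sum_congr rfl fun j _ => ?_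
      congr 1
      rw [← inner_eb_right (gradient u x) j, hgrad_eb]
    rw [hdivE, hnorm]
  have g3 : (fun x => ∑ i, ∑ j,
        (⟪fderiv ℝ H x (eb i), eb j⟫ * ⟪gradient u x, eb i⟫ * ⟪gradient u x, eb j⟫))
      = fun x => ∑ i, ∑ j,
          fderiv ℝ H x (eb i) j * fderiv ℝ u x (eb i) * fderiv ℝ u x (eb j) := by
    funext x
    refine Finset.sum_congr rfl fun i _ => Finset.sum_congr rfl fun j _ => ?_
    rw [inner_eb_right, hgrad_eb, hgrad_eb]
  rw [g1, g2, g3]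
  linarith
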